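/- If λ' is regular dominant and λ is (possibly singular) dominant, both weakly decreasing integer vectors of length n, then the normal fan of GT_{λ'} refines the normal fan of GT_λ; concretely, for every vertex v' of GT_{λ'} there exists a vertex v of GT_λ such that C_v − v ⊆ C_{v'} − v', namely the point v obtained from v' by replacing every coordinate equal to λ'_j by λ_j. -/

import Mathlib

open scoped BigOperators Classical

/-- Index type for Gelfand–Tsetlin pattern positions: (row, column), 0-based. -/
abbrev GTIdx (n : ℕ) := Fin n × Fin n

/-- A position (i,j) is a valid pattern position iff i + j < n (row i has columns 0..n-1-i). -/
def GTValid (n : ℕ) (p : GTIdx n) : Prop := (p.1 : ℕ) + (p.2 : ℕ) < n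

/-- Entry of a real point at natural-number coordinates (0 outside the index range). -/
noncomputable def entryR {n : ℕ} (A : GTIdx n → ℝ) (i j : ℕ) : ℝ :=
  if h : i < n ∧ j < n then A (⟨i, h.1⟩, ⟨j, h.2⟩) else 0

/-- Entry of an integer point at natural-number coordinates (0 outside the index range). -/
def entryZ {n : ℕ} (A : GTIdx n → ℤ) (i j : ℕ) : ℤ :=
  if h : i < n ∧ j < n then A (⟨i, h.1⟩, ⟨j, h.2⟩) else 0

/-- The Gelfand–Tsetlin polytope of λ: top row equal to λ, interlacing inequalities,
and (as a normalization embedding it in a finite-dimensional space) zero at invalid positions. -/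
def GTPoly (n : ℕ) (lam : Fin n → ℝ) : Set (GTIdx n → ℝ) :=
  {A | (∀ j : Fin n, entryR A 0 j = lam j)
    ∧ (∀ i j : ℕ, i + 1 + j < n →
        entryR A (i+1) j ≤ entryR A i j ∧ entryR A i (j+1) ≤ entryR A (i+1) j)
    ∧ (∀ p : GTIdx n, ¬ GTValid n p → A p = 0)}

/-- Integer Gelfand–Tsetlin patterns with top row λ. -/
def GTPat (n : ℕ) (lam : Fin n → ℤ) : Set (GTIdx n → ℤ) :=
  {A | (∀ j : Fin n, entryZ A 0 j = lam j)
    ∧ (∀ i j : ℕ, i + 1 + j < n →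
        entryZ A (i+1) j ≤ entryZ A i j ∧ entryZ A i (j+1) ≤ entryZ A (i+1) j)
    ∧ (∀ p : GTIdx n, ¬ GTValid n p → A p = 0)}

/-- The weight of a pattern: μ_i = (sum of row i-1) - (sum of row i), 1-based;
here `i : Fin n` is 0-based, so `wtZ A i = (row i sum) - (row (i+1) sum)`. -/
def wtZ {n : ℕ} (A : GTIdx n → ℤ) (i : Fin n) : ℤ :=
  (∑ j : Fin n, entryZ A i j) - ∑ j : Fin n, entryZ A ((i : ℕ) + 1) j

noncomputable def wtR {n : ℕ} (A : GTIdx n → ℝ) (i : Fin n) : ℝ :=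
  (∑ j : Fin n, entryR A i j) - ∑ j : Fin n, entryR A ((i : ℕ) + 1) j

/-- Multiset of entries of row i. -/
noncomputable def rowM {n : ℕ} (A : GTIdx n → ℝ) (i : ℕ) : Multiset ℝ :=
  (Finset.univ.filter (fun j : Fin n => i + (j : ℕ) < n)).val.map (fun j => entryR A i (j : ℕ))

/-- Valid pattern positions (the nodes of the ambient graph T). -/
abbrev GTNode (n : ℕ) := {p : GTIdx n // GTValid n p}

/-- `upEdge n p q` : q is an upper neighbour of p in the triangular graph T,
i.e. q = (i-1, j) or (i-1, j+1) where p = (i, j). -/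
def upEdge (n : ℕ) (p q : GTIdx n) : Prop :=
  GTValid n p ∧ GTValid n q ∧ (q.1 : ℕ) + 1 = (p.1 : ℕ) ∧
    ((q.2 : ℕ) = (p.2 : ℕ) ∨ (q.2 : ℕ) = (p.2 : ℕ) + 1)

/-- The equality graph Γ_v of a point v of the GT polytope: nodes are valid positions,
edges join a position to an upper neighbour carrying an equal entry. -/
def Gamma (n : ℕ) (A : GTIdx n → ℝ) : SimpleGraph (GTNode n) where
  Adj p q := (upEdge n p.1 q.1 ∨ upEdge n q.1 p.1) ∧ A p.1 = A q.1
  symm := by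
    constructor
    rintro p q ⟨h, e⟩
    exact ⟨h.symm, e.symm⟩
  loopless := by
    constructor
    rintro p ⟨h | h, _⟩ <;> exact absurd h.2.2.1 (by omega)

/-- Tangent cone of a convex set P at a point v. -/
def tangentCone {E : Type*} [AddCommGroup E] [Module ℝ E] (P : Set E) (v : E) : Set E :=
  {y | ∃ x ∈ P, ∃ t : ℝ, 0 ≤ t ∧ y = v + t • (x - v)}

/-- The ray from v in direction ε. -/
def raySet {E : Type*} [AddCommGroup E] [Module ℝ E] (v ε : E) : Set E :=
  {y | ∃ t : ℝ, 0 ≤ t ∧ y = v + t • ε}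

/-- ε is the direction of an edge (one-dimensional extreme face) of the cone C with apex v. -/
def IsEdgeDir {E : Type*} [AddCommGroup E] [Module ℝ E] (C : Set E) (v ε : E) : Prop :=
  ε ≠ 0 ∧ IsExtreme ℝ C (raySet v ε)

/-- Direction-vector pattern for edges at a simplicial vertex: all nonzero coordinates lie
in rows a..b, one per row, and all are equal to c. -/
def simpDir (n : ℕ) (a b : ℕ) (c : ℝ) (ε : GTIdx n → ℝ) : Prop :=
  (∀ p : GTIdx n, ε p ≠ 0 → GTValid n p ∧ a ≤ (p.1 : ℕ) ∧ (p.1 : ℕ) ≤ b)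
  ∧ (∀ r : ℕ, a ≤ r → r ≤ b → ∃! p : GTIdx n, (p.1 : ℕ) = r ∧ ε p ≠ 0)
  ∧ (∀ p : GTIdx n, ε p ≠ 0 → ε p = c)

/-- A simplicial vertex: a vertex (extreme point) of the GT polytope whose equality graph
is acyclic. -/
def IsSimpVertex (n : ℕ) (lam : Fin n → ℝ) (A : GTIdx n → ℝ) : Prop :=
  A ∈ Set.extremePoints ℝ (GTPoly n lam) ∧ (Gamma n A).IsAcyclic

/- ### Rational functions, integer-point transforms, and the specialization F -/

/-- Field of rational functions in variables indexed by ι. -/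
abbrev KK (ι : Type) := FractionRing (MvPolynomial ι ℚ)

/-- The monomial t^u, u ∈ ℤ^ι, inside the rational function field. -/
noncomputable def tmon (ι : Type) [Fintype ι] (u : ι → ℤ) : KK ι :=
  ∏ i, (algebraMap (MvPolynomial ι ℚ) (KK ι) (MvPolynomial.X i)) ^ (u i)

/-- Indicator (as coefficient function of a formal Laurent series) of the integer points of S. -/
noncomputable def indSet {ι : Type} (S : Set (ι → ℝ)) : (ι → ℤ) → ℚ :=
  fun a => if (fun i => (a i : ℝ)) ∈ S then 1 else 0

/-- `Represents r f` : the rational function r is the integer-point transform of the formal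
Laurent series with coefficient function f, i.e. there is a nonzero Laurent polynomial q such
that q·f is a (finitely supported) Laurent polynomial g and r·q = g as rational functions. -/
noncomputable def Represents {ι : Type} [Fintype ι] (r : KK ι) (f : (ι → ℤ) → ℚ) : Prop :=
  ∃ q : (ι → ℤ) →₀ ℚ, q ≠ 0 ∧ ∃ g : (ι → ℤ) →₀ ℚ,
    (∀ a, g a = ∑ b ∈ q.support, q b * f (a - b)) ∧
    r * (∑ b ∈ q.support, (q b : KK ι) * tmon ι b)
      = ∑ a ∈ g.support, (g a : KK ι) * tmon ι a

/-- Field of rational functions in x_1, ..., x_n. -/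
abbrev Kx (n : ℕ) := FractionRing (MvPolynomial (Fin n) ℚ)

/-- The variable x_i. -/
noncomputable def xv (n : ℕ) (i : Fin n) : Kx n :=
  algebraMap (MvPolynomial (Fin n) ℚ) (Kx n) (MvPolynomial.X i)

/-- The substitution underlying F: t_{0,j} ↦ x_1 and t_{i,j} ↦ x_i⁻¹ x_{i+1} for i ≥ 1
(1-based x's; in our 0-based indexing t_{i,·} ↦ x_{i-1}⁻¹ · x_i for i ≥ 1, t_{0,·} ↦ x_0). -/
noncomputable def xsub (n : ℕ) (p : GTIdx n) : Kx n :=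
  if (p.1 : ℕ) = 0 then xv n p.1
  else (xv n (⟨(p.1 : ℕ) - 1, Nat.lt_of_le_of_lt (Nat.sub_le _ _) p.1.isLt⟩ : Fin n))⁻¹ * xv n p.1

/-- The specialization F on Laurent polynomials, as a ring homomorphism. -/
noncomputable def phiF (n : ℕ) : MvPolynomial (GTIdx n) ℚ →+* Kx n :=
  MvPolynomial.eval₂Hom (Rat.castHom (Kx n)) (xsub n)

/-- `FSpec n r y` : the specialization F of the rational function r (in the t-variables)
is defined and equal to y; i.e. r = p/q with F(q) ≠ 0 and y = F(p)/F(q). -/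
noncomputable def FSpec (n : ℕ) (r : KK (GTIdx n)) (y : Kx n) : Prop :=
  ∃ p q : MvPolynomial (GTIdx n) ℚ, phiF n q ≠ 0 ∧
    r * algebraMap (MvPolynomial (GTIdx n) ℚ) (KK (GTIdx n)) q
      = algebraMap (MvPolynomial (GTIdx n) ℚ) (KK (GTIdx n)) p ∧
    y * phiF n q = phiF n p

/-- The monomial e^μ = x^μ for an integral weight μ. -/
noncomputable def emon {n : ℕ} (mu : Fin n → ℤ) : Kx n := ∏ i, xv n i ^ mu i

/-- ρ = (n-1, n-2, ..., 0). -/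
def rhoW (n : ℕ) (i : Fin n) : ℤ := (n : ℤ) - 1 - (i : ℤ)

/-- The Schur (Laurent) polynomial of λ, defined by Weyl's character formula
(bialternant form). -/
noncomputable def schur (n : ℕ) (lam : Fin n → ℤ) : Kx n :=
  (∑ w : Equiv.Perm (Fin n), ((Equiv.Perm.sign w : ℤ) : Kx n)
      * ∏ i, xv n i ^ (lam (w⁻¹ i) + rhoW n (w⁻¹ i)))
  / (∑ w : Equiv.Perm (Fin n), ((Equiv.Perm.sign w : ℤ) : Kx n)
      * ∏ i, xv n i ^ (rhoW n (w⁻¹ i)))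

/-- The summand w(e^λ / Π_{i<j} (1 - x_j/x_i)) of Weyl's character formula. -/
noncomputable def weylTerm (n : ℕ) (lam : Fin n → ℤ) (w : Equiv.Perm (Fin n)) : Kx n :=
  (∏ i, xv n (w i) ^ lam i)
    / ∏ p ∈ Finset.univ.filter (fun p : Fin n × Fin n => p.1 < p.2),
        (1 - xv n (w p.2) / xv n (w p.1))

/-- Integer version of the edge-direction pattern. -/
def simpDirZ (n : ℕ) (a b : ℕ) (c : ℤ) (ε : GTIdx n → ℤ) : Prop :=
  (∀ p : GTIdx n, ε p ≠ 0 → GTValid n p ∧ a ≤ (p.1 : ℕ) ∧ (p.1 : ℕ) ≤ b)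
  ∧ (∀ r : ℕ, a ≤ r → r ≤ b → ∃! p : GTIdx n, (p.1 : ℕ) = r ∧ ε p ≠ 0)
  ∧ (∀ p : GTIdx n, ε p ≠ 0 → ε p = c)

/-- F(t^u): the specialization of the Laurent monomial t^u. -/
noncomputable def Fmon (n : ℕ) (u : GTIdx n → ℤ) : Kx n := ∏ p, xsub n p ^ u p

/-- A rational polytope in ℝ^m: a bounded set cut out by finitely many integral
linear inequalities. -/
def IsRatPolytope (m : ℕ) (P : Set (Fin m → ℝ)) : Prop :=
  Bornology.IsBounded P ∧ ∃ (k : ℕ) (a : Fin k → Fin m → ℤ) (b : Fin k → ℤ),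
    P = {x | ∀ i, ∑ j, (a i j : ℝ) * x j ≤ (b i : ℝ)}

/-- A rational polyhedron in ℝ^m. -/
def IsRatPolyhedron (m : ℕ) (P : Set (Fin m → ℝ)) : Prop :=
  ∃ (k : ℕ) (a : Fin k → Fin m → ℤ) (b : Fin k → ℤ),
    P = {x | ∀ i, ∑ j, (a i j : ℝ) * x j ≤ (b i : ℝ)}

/-- The cone C_Δ attached to a connected component Δ = c of the equality graph Γ_v:
vectors supported on the nodes of Δ, vanishing at the top (row-0) node of Δ, and
satisfying the interlacing inequalities along the edges of Δ. -/
noncomputable def compCone (n : ℕ) (A : GTIdx n → ℝ) (c : (Gamma n A).ConnectedComponent) :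
    Set (GTIdx n → ℝ) :=
  {x | (∀ p : GTIdx n,
          (¬ ∃ hp : GTValid n p, (Gamma n A).connectedComponentMk ⟨p, hp⟩ = c) → x p = 0)
    ∧ (∀ p : GTNode n, (Gamma n A).connectedComponentMk p = c → (p.1.1 : ℕ) = 0 → x p.1 = 0)
    ∧ (∀ p q : GTNode n, (Gamma n A).connectedComponentMk p = c →
        upEdge n p.1 q.1 → A p.1 = A q.1 →
        (((q.1.2 : ℕ) = (p.1.2 : ℕ)) → x p.1 ≤ x q.1) ∧
        (((q.1.2 : ℕ) = (p.1.2 : ℕ) + 1) → x q.1 ≤ x p.1))}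

/-! ### Auxiliary lemmas for Statement 16 -/

section Aux16

lemma entryR_pos {n : ℕ} (A : GTIdx n → ℝ) {i j : ℕ} (hi : i < n) (hj : j < n) :
    entryR A i j = A (⟨i, hi⟩, ⟨j, hj⟩) := dif_pos ⟨hi, hj⟩

lemma entryR_comb {n : ℕ} (w ε : GTIdx n → ℝ) (t : ℝ) (i j : ℕ) :
    entryR (w + t • ε) i j = entryR w i j + t * entryR ε i j := by
  unfold entryR
  split
  · simp
  · simp

lemma entryR_neg {n : ℕ} (ε : GTIdx n → ℝ) (i j : ℕ) :
    entryR (-ε) i j = -entryR ε i j := by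
  unfold entryR
  split
  · simp
  · simp

/-- The basic "how far can we move" bound for a single linear inequality. -/
noncomputable def bfun (s d : ℝ) : ℝ := if d ≤ 0 then 1 else s / d

lemma bfun_spec (s d : ℝ) (hs : 0 ≤ s) (h : s = 0 → d ≤ 0) :
    0 < bfun s d ∧ ∀ t : ℝ, 0 ≤ t → t ≤ bfun s d → t * d ≤ s := by
  unfold bfun
  split_ifs with hd
  · exact ⟨one_pos, fun t ht _ => le_trans (mul_nonpos_of_nonneg_of_nonpos ht hd) hs⟩
  · push_neg at hd
    have hs' : 0 < s := hs.lt_of_ne fun e => absurd (h e.symm) (not_le.mpr hd)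
    exact ⟨div_pos hs' hd, fun t _ htb => (le_div_iff₀ hd).mp htb⟩

/-- The bound attached to constraint `(i, j, which)`. -/
noncomputable def bndF {n : ℕ} (w ε : GTIdx n → ℝ) (x : ℕ × ℕ × Bool) : ℝ :=
  if x.1 + 1 + x.2.1 < n then
    (if x.2.2 = true then
      bfun (entryR w x.1 x.2.1 - entryR w (x.1+1) x.2.1)
           (entryR ε (x.1+1) x.2.1 - entryR ε x.1 x.2.1)
     else
      bfun (entryR w (x.1+1) x.2.1 - entryR w x.1 (x.2.1+1))
           (entryR ε x.1 (x.2.1+1) - entryR ε (x.1+1) x.2.1))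
  else 1

/-- Perturbation lemma: if ε vanishes on invalid positions and the top row, and respects
(weakly) every inequality that is tight at w, then w + t•ε stays in the polytope for all
small t ≥ 0. -/
lemma perturb {n : ℕ} (mu : Fin n → ℝ) (w ε : GTIdx n → ℝ)
    (hw : w ∈ GTPoly n mu)
    (h0 : ∀ p : GTIdx n, ¬ GTValid n p → ε p = 0)
    (htop : ∀ j : Fin n, entryR ε 0 (j : ℕ) = 0)
    (hc : ∀ i j : ℕ, i + 1 + j < n →
      (entryR w (i+1) j = entryR w i j → entryR ε (i+1) j ≤ entryR ε i j) ∧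
      (entryR w i (j+1) = entryR w (i+1) j → entryR ε i (j+1) ≤ entryR ε (i+1) j)) :
    ∃ δ : ℝ, 0 < δ ∧ ∀ t : ℝ, 0 ≤ t → t ≤ δ → w + t • ε ∈ GTPoly n mu := by
  classical
  obtain ⟨hw1, hw2, hw3⟩ := hw
  have spec1 : ∀ i j : ℕ, i + 1 + j < n →
      0 < bfun (entryR w i j - entryR w (i+1) j) (entryR ε (i+1) j - entryR ε i j) ∧
      ∀ t : ℝ, 0 ≤ t →
        t ≤ bfun (entryR w i j - entryR w (i+1) j) (entryR ε (i+1) j - entryR ε i j) →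
        t * (entryR ε (i+1) j - entryR ε i j) ≤ entryR w i j - entryR w (i+1) j := by
    intro i j h
    exact bfun_spec _ _ (by linarith [(hw2 i j h).1])
      (fun e => by have := (hc i j h).1 (by linarith); linarith)
  have spec2 : ∀ i j : ℕ, i + 1 + j < n →
      0 < bfun (entryR w (i+1) j - entryR w i (j+1)) (entryR ε i (j+1) - entryR ε (i+1) j) ∧
      ∀ t : ℝ, 0 ≤ t →
        t ≤ bfun (entryR w (i+1) j - entryR w i (j+1)) (entryR ε i (j+1) - entryR ε (i+1) j) →
        t * (entryR ε i (j+1) - entryR ε (i+1) j) ≤ entryR w (i+1) j - entryR w i (j+1) := by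
    intro i j h
    exact bfun_spec _ _ (by linarith [(hw2 i j h).2])
      (fun e => by have := (hc i j h).2 (by linarith); linarith)
  set F : Finset (ℕ × ℕ × Bool) :=
    (Finset.range n) ×ˢ (Finset.range n) ×ˢ ({true, false} : Finset Bool) with hF
  set T : Finset ℝ := insert 1 (F.image (bndF w ε)) with hT
  have hTne : T.Nonempty := ⟨1, Finset.mem_insert_self _ _⟩
  refine ⟨T.min' hTne, ?_, ?_⟩
  · rw [Finset.lt_min'_iff]
    intro b hb
    rcases Finset.mem_insert.mp hb with rfl | hb
    · exact one_pos
    · obtain ⟨x, _, rfl⟩ := Finset.mem_image.mp hb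
      obtain ⟨i, j, k⟩ := x
      unfold bndF
      dsimp only
      split_ifs with hval hk
      · exact (spec1 i j hval).1
      · exact (spec2 i j hval).1
      · exact one_pos
  · intro t ht htδ
    have hmem : ∀ i j : ℕ, i + 1 + j < n → ∀ k : Bool, bndF w ε (i, j, k) ∈ T := by
      intro i j h k
      refine Finset.mem_insert_of_mem (Finset.mem_image_of_mem _ ?_)
      simp only [hF, Finset.mem_product, Finset.mem_range]
      refine ⟨by omega, by omega, ?_⟩
      cases k <;> simp
    refine ⟨?_, ?_, ?_⟩
    · intro j
      rw [entryR_comb, htop j, hw1 j]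
      ring
    · intro i j h
      constructor
      · have hb : T.min' hTne ≤ bndF w ε (i, j, true) := Finset.min'_le _ _ (hmem i j h true)
        have hb' : bndF w ε (i, j, true)
            = bfun (entryR w i j - entryR w (i+1) j) (entryR ε (i+1) j - entryR ε i j) := by
          simp [bndF, h]
        have := (spec1 i j h).2 t ht (le_trans htδ (by rw [hb'] at hb; exact hb))
        rw [entryR_comb, entryR_comb]
        nlinarith [this]
      · have hb : T.min' hTne ≤ bndF w ε (i, j, false) := Finset.min'_le _ _ (hmem i j h false)
        have hb' : bndF w ε (i, j, false)
            = bfun (entryR w (i+1) j - entryR w i (j+1)) (entryR ε i (j+1) - entryR ε (i+1) j) := by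
          simp [bndF, h]
        have := (spec2 i j h).2 t ht (le_trans htδ (by rw [hb'] at hb; exact hb))
        rw [entryR_comb, entryR_comb]
        nlinarith [this]
    · intro p hp
      have : (w + t • ε) p = w p + t * ε p := rfl
      rw [this, hw3 p hp, h0 p hp]
      ring

/-- Top-row entries of a point of the GT polytope. -/
lemma gt_top {n : ℕ} {mu : Fin n → ℝ} {A : GTIdx n → ℝ} (hA : A ∈ GTPoly n mu) (j : Fin n) :
    A (⟨0, j.pos⟩, j) = mu j := by
  have := hA.1 j
  rwa [entryR_pos A j.pos j.isLt] at this

/-- Interlacing inequalities of a point of the GT polytope, in coordinate form. -/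
lemma gt_edge {n : ℕ} {mu : Fin n → ℝ} {A : GTIdx n → ℝ} (hA : A ∈ GTPoly n mu)
    {i j : ℕ} (h : i + 1 + j < n) :
    A (⟨i+1, by omega⟩, ⟨j, by omega⟩) ≤ A (⟨i, by omega⟩, ⟨j, by omega⟩) ∧
    A (⟨i, by omega⟩, ⟨j+1, by omega⟩) ≤ A (⟨i+1, by omega⟩, ⟨j, by omega⟩) := by
  have h2 := hA.2.1 i j h
  rwa [entryR_pos A (show i+1 < n by omega) (show j < n by omega),
       entryR_pos A (show i < n by omega) (show j < n by omega),
       entryR_pos A (show i < n by omega) (show j+1 < n by omega)] at h2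

/-- Every valid coordinate of a vertex of the GT polytope equals some μ_j. -/
lemma vertex_coords {n : ℕ} (lamr : Fin n → ℝ) (v' : GTIdx n → ℝ)
    (hv' : v' ∈ Set.extremePoints ℝ (GTPoly n lamr)) :
    ∀ p : GTIdx n, GTValid n p → ∃ j : Fin n, v' p = lamr j := by
  classical
  by_contra hcon
  push_neg at hcon
  obtain ⟨p₀, hp₀v, hp₀⟩ := hcon
  set ε : GTIdx n → ℝ :=
    fun p => if GTValid n p ∧ ∀ j, v' p ≠ lamr j then 1 else 0 with hε
  have hεeq : ∀ p q : GTIdx n, GTValid n p → GTValid n q → v' p = v' q → ε p = ε q := by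
    intro p q hp hq hpq
    simp only [hε, hpq, hp, hq, true_and]
  have h0 : ∀ p : GTIdx n, ¬ GTValid n p → ε p = 0 := by
    intro p hp
    simp only [hε]
    rw [if_neg]
    rintro ⟨h1, -⟩
    exact hp h1
  have htop : ∀ j : Fin n, entryR ε 0 (j : ℕ) = 0 := by
    intro j
    rw [entryR_pos ε j.pos j.isLt]
    show ε (⟨0, j.pos⟩, j) = 0
    simp only [hε]
    rw [if_neg]
    rintro ⟨-, hall⟩
    exact hall j (gt_top hv'.1 j)
  have hceq : ∀ i j : ℕ, i + 1 + j < n →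
      (entryR v' (i+1) j = entryR v' i j → entryR ε (i+1) j = entryR ε i j) ∧
      (entryR v' i (j+1) = entryR v' (i+1) j → entryR ε i (j+1) = entryR ε (i+1) j) := by
    intro i j h
    constructor
    · intro htight
      rw [entryR_pos v' (show i+1 < n by omega) (show j < n by omega),
          entryR_pos v' (show i < n by omega) (show j < n by omega)] at htight
      rw [entryR_pos ε (show i+1 < n by omega) (show j < n by omega),
          entryR_pos ε (show i < n by omega) (show j < n by omega)]
      exact hεeq _ _ (show (i+1) + j < n from by omega) (show i + j < n by omega) htight
    · intro htight
      rw [entryR_pos v' (show i < n by omega) (show j+1 < n by omega),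
          entryR_pos v' (show i+1 < n by omega) (show j < n by omega)] at htight
      rw [entryR_pos ε (show i < n by omega) (show j+1 < n by omega),
          entryR_pos ε (show i+1 < n by omega) (show j < n by omega)]
      exact hεeq _ _ (show i + (j+1) < n by omega) (show (i+1) + j < n by omega) htight
  obtain ⟨δ₁, hδ₁, hδ₁m⟩ := perturb lamr v' ε hv'.1 h0 htop
    (fun i j h => ⟨fun ht => le_of_eq ((hceq i j h).1 ht),
                   fun ht => le_of_eq ((hceq i j h).2 ht)⟩)
  have hcneg : ∀ i j : ℕ, i + 1 + j < n →
      (entryR v' (i+1) j = entryR v' i j →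
        entryR (-ε) (i+1) j ≤ entryR (-ε) i j) ∧
      (entryR v' i (j+1) = entryR v' (i+1) j →
        entryR (-ε) i (j+1) ≤ entryR (-ε) (i+1) j) := by
    intro i j h
    constructor
    · intro ht
      rw [entryR_neg, entryR_neg]
      exact neg_le_neg (le_of_eq ((hceq i j h).1 ht).symm)
    · intro ht
      rw [entryR_neg, entryR_neg]
      exact neg_le_neg (le_of_eq ((hceq i j h).2 ht).symm)
  obtain ⟨δ₂, hδ₂, hδ₂m⟩ := perturb lamr v' (-ε) hv'.1
    (fun p hp => by rw [Pi.neg_apply, h0 p hp, neg_zero])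
    (fun j => by rw [entryR_neg, htop j, neg_zero])
    hcneg
  set δ : ℝ := min δ₁ δ₂ with hδdef
  have hδ : 0 < δ := lt_min hδ₁ hδ₂
  have m1 : v' + δ • ε ∈ GTPoly n lamr := hδ₁m δ hδ.le (min_le_left _ _)
  have m2 : v' - δ • ε ∈ GTPoly n lamr := by
    have := hδ₂m δ hδ.le (min_le_right _ _)
    rwa [smul_neg, ← sub_eq_add_neg] at this
  have hseg : v' ∈ openSegment ℝ (v' + δ • ε) (v' - δ • ε) := by
    refine ⟨1/2, 1/2, by norm_num, by norm_num, by norm_num, ?_⟩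
    funext p
    simp only [Pi.add_apply, Pi.sub_apply, Pi.smul_apply, smul_eq_mul]
    ring
  have := hv'.2 m1 m2 hseg
  have hε0 : δ * ε p₀ = 0 := by
    have h := congrFun this p₀
    simp only [Pi.add_apply, Pi.smul_apply, smul_eq_mul] at h
    linarith
  have : ε p₀ = 1 := by
    simp only [hε]
    rw [if_pos ⟨hp₀v, hp₀⟩]
  rw [this, mul_one] at hε0
  exact hδ.ne' hε0

end Aux16

/-- for regular dominant λ' and dominant λ, the normal fan of GT_{λ'} refines
that of GT_λ: for any vertex v' of GT_{λ'}, the point v obtained by replacing every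
coordinate equal to λ'_j by λ_j is a vertex of GT_λ and C_v - v ⊆ C_{v'} - v'. -/
theorem statement16 (n : ℕ) (lam' lam : Fin n → ℤ)
    (hreg' : ∀ i j : Fin n, i < j → lam' j < lam' i)
    (hdom : ∀ i j : Fin n, i ≤ j → lam j ≤ lam i)
    (v' : GTIdx n → ℝ)
    (hv' : v' ∈ Set.extremePoints ℝ (GTPoly n (fun i => (lam' i : ℝ))))
    (v : GTIdx n → ℝ)
    (hvdef : ∀ p : GTIdx n, GTValid n p → ∀ j : Fin n,
      v' p = (lam' j : ℝ) → v p = (lam j : ℝ))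
    (hv0 : ∀ p : GTIdx n, ¬ GTValid n p → v p = 0) :
    v ∈ Set.extremePoints ℝ (GTPoly n (fun i => (lam i : ℝ))) ∧
    (fun y => y - v) '' tangentCone (GTPoly n (fun i => (lam i : ℝ))) v
      ⊆ (fun y => y - v') '' tangentCone (GTPoly n (fun i => (lam' i : ℝ))) v' := by
  classical
  set lr' : Fin n → ℝ := fun i => (lam' i : ℝ) with hlr'
  set lr : Fin n → ℝ := fun i => (lam i : ℝ) with hlr
  have hreg : ∀ i j : Fin n, i < j → lr' j < lr' i := by
    intro i j h
    simp only [hlr']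
    exact_mod_cast hreg' i j h
  have hmono0 : ∀ i j : Fin n, lr' j ≤ lr' i → lr j ≤ lr i := by
    intro i j h
    have hij : i ≤ j := by
      by_contra hc
      push_neg at hc
      exact absurd h (not_le.mpr (hreg j i hc))
    simp only [hlr, hlr']
    exact_mod_cast hdom i j hij
  have hco : ∀ p : GTIdx n, GTValid n p → ∃ j : Fin n, v' p = lr' j :=
    vertex_coords lr' v' hv'
  choose jj hjj using hco
  have hvj : ∀ (p : GTIdx n) (hp : GTValid n p), v p = lr (jj p hp) :=
    fun p hp => hvdef p hp _ (hjj p hp)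
  have hvmono : ∀ (p q : GTIdx n) (hp : GTValid n p) (hq : GTValid n q),
      v' q ≤ v' p → v q ≤ v p := by
    intro p q hp hq h
    rw [hvj p hp, hvj q hq]
    apply hmono0
    rw [← hjj p hp, ← hjj q hq]
    exact h
  have hveq : ∀ (p q : GTIdx n) (hp : GTValid n p) (hq : GTValid n q),
      v' p = v' q → v p = v q := fun p q hp hq h =>
    le_antisymm (hvmono q p hq hp h.le) (hvmono p q hp hq h.ge)
  -- membership of v in GT_lam
  have hvm : v ∈ GTPoly n lr := by
    refine ⟨?_, ?_, hv0⟩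
    · intro j
      rw [entryR_pos v j.pos j.isLt]
      show v (⟨0, j.pos⟩, j) = lr j
      have hval : GTValid n ((⟨0, j.pos⟩, j) : GTIdx n) := by
        simpa [GTValid] using j.isLt
      rw [hvj _ hval]
      congr 1
      have h1 : lr' (jj _ hval) = lr' j := by
        rw [← hjj _ hval]
        exact gt_top hv'.1 j
      by_contra hne
      rcases lt_or_gt_of_ne hne with hlt | hlt
      · exact absurd h1 (ne_of_gt (hreg _ _ hlt))
      · exact absurd h1 (ne_of_lt (hreg _ _ hlt))
    · intro i j h
      have e1 := (gt_edge hv'.1 h).1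
      have e2 := (gt_edge hv'.1 h).2
      constructor
      · rw [entryR_pos v (show i+1 < n by omega) (show j < n by omega),
            entryR_pos v (show i < n by omega) (show j < n by omega)]
        refine hvmono _ _ ?_ ?_ e1
        · show i + j < n; omega
        · show i + 1 + j < n; omega
      · rw [entryR_pos v (show i < n by omega) (show j+1 < n by omega),
            entryR_pos v (show i+1 < n by omega) (show j < n by omega)]
        refine hvmono _ _ ?_ ?_ e2
        · show i + 1 + j < n; omega
        · show i + (j + 1) < n; omega
  -- extremality of v
  have hext : v ∈ Set.extremePoints ℝ (GTPoly n lr) := by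
    refine ⟨hvm, ?_⟩
    rintro x hx y hy ⟨a, b, ha, hb, hab, hxy⟩
    have key : ∀ (P Q : GTIdx n), x P ≤ x Q → y P ≤ y Q → v P = v Q → x P = x Q := by
      intro P Q hxPQ hyPQ hvPQ
      have e1 : a * x P + b * y P = v P := by
        have := congrFun hxy P
        simpa using this
      have e2 : a * x Q + b * y Q = v Q := by
        have := congrFun hxy Q
        simpa using this
      refine le_antisymm hxPQ ?_
      have h2 : a * x Q ≤ a * x P := by
        have h3 := mul_le_mul_of_nonneg_left hyPQ hb.le
        linarith
      exact le_of_mul_le_mul_left h2 ha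
    set ε : GTIdx n → ℝ := x - v with hε
    have hεapp : ∀ p, ε p = x p - v p := fun p => rfl
    have h0 : ∀ p : GTIdx n, ¬ GTValid n p → ε p = 0 := by
      intro p hp
      rw [hεapp, hx.2.2 p hp, hv0 p hp, sub_zero]
    have htop : ∀ j : Fin n, entryR ε 0 (j : ℕ) = 0 := by
      intro j
      rw [entryR_pos ε j.pos j.isLt]
      show ε (⟨0, j.pos⟩, j) = 0
      rw [hεapp, gt_top hx j, gt_top hvm j, sub_self]
    have hceq : ∀ i j : ℕ, i + 1 + j < n →
        (entryR v' (i+1) j = entryR v' i j → entryR ε (i+1) j = entryR ε i j) ∧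
        (entryR v' i (j+1) = entryR v' (i+1) j → entryR ε i (j+1) = entryR ε (i+1) j) := by
      intro i j h
      constructor
      · intro htight
        rw [entryR_pos v' (show i+1 < n by omega) (show j < n by omega),
            entryR_pos v' (show i < n by omega) (show j < n by omega)] at htight
        rw [entryR_pos ε (show i+1 < n by omega) (show j < n by omega),
            entryR_pos ε (show i < n by omega) (show j < n by omega)]
        have hvPQ := by
          refine hveq _ _ ?_ ?_ htight
          · show i + 1 + j < n; omega
          · show i + j < n; omega
        have hxeq := key _ _ (gt_edge hx h).1 (gt_edge hy h).1 hvPQ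
        rw [hεapp, hεapp, hxeq, hvPQ]
      · intro htight
        rw [entryR_pos v' (show i < n by omega) (show j+1 < n by omega),
            entryR_pos v' (show i+1 < n by omega) (show j < n by omega)] at htight
        rw [entryR_pos ε (show i < n by omega) (show j+1 < n by omega),
            entryR_pos ε (show i+1 < n by omega) (show j < n by omega)]
        have hvPQ := by
          refine hveq _ _ ?_ ?_ htight
          · show i + (j + 1) < n; omega
          · show i + 1 + j < n; omega
        have hxeq := key _ _ (gt_edge hx h).2 (gt_edge hy h).2 hvPQ
        rw [hεapp, hεapp, hxeq, hvPQ]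
    obtain ⟨δ₁, hδ₁, hδ₁m⟩ := perturb lr' v' ε hv'.1 h0 htop
      (fun i j h => ⟨fun ht => le_of_eq ((hceq i j h).1 ht),
                     fun ht => le_of_eq ((hceq i j h).2 ht)⟩)
    have hcneg : ∀ i j : ℕ, i + 1 + j < n →
        (entryR v' (i+1) j = entryR v' i j →
          entryR (-ε) (i+1) j ≤ entryR (-ε) i j) ∧
        (entryR v' i (j+1) = entryR v' (i+1) j →
          entryR (-ε) i (j+1) ≤ entryR (-ε) (i+1) j) := by
      intro i j h
      constructor
      · intro ht
        rw [entryR_neg, entryR_neg]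
        exact neg_le_neg (le_of_eq ((hceq i j h).1 ht).symm)
      · intro ht
        rw [entryR_neg, entryR_neg]
        exact neg_le_neg (le_of_eq ((hceq i j h).2 ht).symm)
    obtain ⟨δ₂, hδ₂, hδ₂m⟩ := perturb lr' v' (-ε) hv'.1
      (fun p hp => by rw [Pi.neg_apply, h0 p hp, neg_zero])
      (fun j => by rw [entryR_neg, htop j, neg_zero])
      hcneg
    set δ : ℝ := min δ₁ δ₂ with hδdef
    have hδ : 0 < δ := lt_min hδ₁ hδ₂
    have m1 : v' + δ • ε ∈ GTPoly n lr' := hδ₁m δ hδ.le (min_le_left _ _)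
    have m2 : v' - δ • ε ∈ GTPoly n lr' := by
      have := hδ₂m δ hδ.le (min_le_right _ _)
      rwa [smul_neg, ← sub_eq_add_neg] at this
    have hseg : v' ∈ openSegment ℝ (v' + δ • ε) (v' - δ • ε) := by
      refine ⟨1/2, 1/2, by norm_num, by norm_num, by norm_num, ?_⟩
      funext p
      simp only [Pi.add_apply, Pi.sub_apply, Pi.smul_apply, smul_eq_mul]
      ring
    have hfix := hv'.2 m1 m2 hseg
    have hε0 : ε = 0 := by
      have hδε : δ • ε = 0 := by
        have := hfix
        rwa [add_eq_left] at this
      rcases smul_eq_zero.mp hδε with h | h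
      · exact absurd h hδ.ne'
      · exact h
    have hxv : x = v := by
      have : x - v = 0 := hε0
      exact sub_eq_zero.mp this
    exact hxv
  refine ⟨hext, ?_⟩
  -- tangent cone inclusion
  rintro y₀ ⟨z, ⟨x, hx, t, ht, rfl⟩, rfl⟩
  set ε : GTIdx n → ℝ := t • (x - v) with hε
  have hεapp : ∀ p, ε p = t * (x p - v p) := fun p => rfl
  have h0 : ∀ p : GTIdx n, ¬ GTValid n p → ε p = 0 := by
    intro p hp
    rw [hεapp, hx.2.2 p hp, hv0 p hp]
    ring
  have htop : ∀ j : Fin n, entryR ε 0 (j : ℕ) = 0 := by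
    intro j
    rw [entryR_pos ε j.pos j.isLt]
    show ε (⟨0, j.pos⟩, j) = 0
    rw [hεapp, gt_top hx j, gt_top hvm j]
    ring
  have hc : ∀ i j : ℕ, i + 1 + j < n →
      (entryR v' (i+1) j = entryR v' i j → entryR ε (i+1) j ≤ entryR ε i j) ∧
      (entryR v' i (j+1) = entryR v' (i+1) j → entryR ε i (j+1) ≤ entryR ε (i+1) j) := by
    intro i j h
    constructor
    · intro htight
      rw [entryR_pos v' (show i+1 < n by omega) (show j < n by omega),
          entryR_pos v' (show i < n by omega) (show j < n by omega)] at htight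
      rw [entryR_pos ε (show i+1 < n by omega) (show j < n by omega),
          entryR_pos ε (show i < n by omega) (show j < n by omega)]
      have hvPQ := by
        refine hveq _ _ ?_ ?_ htight
        · show i + 1 + j < n; omega
        · show i + j < n; omega
      rw [hεapp, hεapp]
      have hxle := (gt_edge hx h).1
      apply mul_le_mul_of_nonneg_left _ ht
      rw [hvPQ]
      exact sub_le_sub_right hxle _
    · intro htight
      rw [entryR_pos v' (show i < n by omega) (show j+1 < n by omega),
          entryR_pos v' (show i+1 < n by omega) (show j < n by omega)] at htight
      rw [entryR_pos ε (show i < n by omega) (show j+1 < n by omega),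
          entryR_pos ε (show i+1 < n by omega) (show j < n by omega)]
      have hvPQ := by
        refine hveq _ _ ?_ ?_ htight
        · show i + (j + 1) < n; omega
        · show i + 1 + j < n; omega
      rw [hεapp, hεapp]
      have hxle := (gt_edge hx h).2
      apply mul_le_mul_of_nonneg_left _ ht
      rw [hvPQ]
      exact sub_le_sub_right hxle _
  obtain ⟨δ, hδ, hδm⟩ := perturb lr' v' ε hv'.1 h0 htop hc
  have hx' : v' + δ • ε ∈ GTPoly n lr' := hδm δ hδ.le le_rfl
  refine ⟨v' + ε, ⟨v' + δ • ε, hx', 1/δ, by positivity, ?_⟩, ?_⟩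
  · rw [add_sub_cancel_left, smul_smul, one_div_mul_cancel hδ.ne', one_smul]
  · show (v' + ε) - v' = (v + t • (x - v)) - v
    rw [add_sub_cancel_left, add_sub_cancel_left]
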